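/- arXiv:2603.21946 — 2 statements merged into one kernel-verified Lean document; each statement's English description precedes it below -/
import Mathlib

section
/- Let H be a complex Hilbert space, X a set, and (p_x)_{x∈X} a family of pairwise orthogonal orthogonal projections in B(H) (p_x p_y = 0 for x ≠ y) with ∑_{x∈X} p_x ξ = ξ (as an unconditional sum) for every ξ ∈ H. Suppose given pairwise disjoint finite subsets X_r ⊆ X for r ≥ 1 with |X_r| = r, unit vectors η_x in the range of p_x for each x ∈ ⋃_r X_r, points j_r ∈ X_r, and set ξ_r := r^{-1/2} ∑_{x∈X_r} η_x. Let V ∈ B(H) satisfy V η_{j_r} = ξ_r for all r ≥ 1. Then for every k ∈ ℕ and every T ∈ S_k, one has ‖T − V‖ ≥ 1. -/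
open scoped InnerProductSpace
open RCLike Filter

lemma bessel_proj {H : Type*} [NormedAddCommGroup H] [InnerProductSpace ℂ H] [CompleteSpace H]
    {X : Type*} (p : X → (H →L[ℂ] H))
    (hsa : ∀ x, IsSelfAdjoint (p x))
    (hidem : ∀ x, IsIdempotentElem (p x))
    (horth : ∀ x y, x ≠ y → p x * p y = 0)
    (F : Finset X) (ζ : H) : ∑ y ∈ F, ‖p y ζ‖^2 ≤ ‖ζ‖^2 := by
  set q : H →L[ℂ] H := ∑ y ∈ F, p y with hq
  have hsym : ∀ x, ∀ u v : H, ⟪p x u, v⟫_ℂ = ⟪u, p x v⟫_ℂ := fun x => (hsa x).isSymmetric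
  have hqq : q * q = q := by
    rw [hq, Finset.sum_mul]
    refine Finset.sum_congr rfl (fun y hy => ?_)
    rw [Finset.mul_sum]
    rw [Finset.sum_eq_single_of_mem y hy (fun z hz hne => horth y z (fun h => hne h.symm))]
    exact hidem y
  have h1 : ∀ y, ‖p y ζ‖^2 = re ⟪ζ, p y ζ⟫_ℂ := by
    intro y
    have : ⟪p y ζ, p y ζ⟫_ℂ = ⟪ζ, p y ζ⟫_ℂ := by
      rw [hsym y]
      congr 1
      have := hidem y
      calc p y (p y ζ) = (p y * p y) ζ := rfl
        _ = p y ζ := by rw [this]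
    rw [← @inner_self_eq_norm_sq ℂ, this]
  have hsum : ∑ y ∈ F, ‖p y ζ‖^2 = re ⟪ζ, q ζ⟫_ℂ := by
    simp only [h1, hq, ContinuousLinearMap.sum_apply, inner_sum, map_sum]
  have h2 : ‖q ζ‖^2 = re ⟪ζ, q ζ⟫_ℂ := by
    have hqsym : ∀ u v : H, ⟪q u, v⟫_ℂ = ⟪u, q v⟫_ℂ := by
      intro u v
      simp only [hq, ContinuousLinearMap.sum_apply, sum_inner, inner_sum]
      exact Finset.sum_congr rfl (fun y _ => hsym y u v)
    have : ⟪q ζ, q ζ⟫_ℂ = ⟪ζ, q ζ⟫_ℂ := by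
      rw [hqsym]
      congr 1
      calc q (q ζ) = (q * q) ζ := rfl
        _ = q ζ := by rw [hqq]
    rw [← @inner_self_eq_norm_sq ℂ, this]
  have h3 : re ⟪ζ, q ζ⟫_ℂ ≤ ‖ζ‖ * ‖q ζ‖ := re_inner_le_norm ζ (q ζ)
  rw [hsum]
  nlinarith [norm_nonneg (q ζ), norm_nonneg ζ, h2, h3]



/-- For `k : ℕ`, `blockSparse p k` is the set of operators `T ∈ B(H)` such that for every
`x ∈ X` the set `{y : X | p y * T * p x ≠ 0}` has at most `k` elements, and for every
`y ∈ X` the set `{x : X | p y * T * p x ≠ 0}` has at most `k` elements. -/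
def blockSparse {H : Type*} [NormedAddCommGroup H] [InnerProductSpace ℂ H]
    {X : Type*} (p : X → (H →L[ℂ] H)) (k : ℕ) : Set (H →L[ℂ] H) :=
  {T | (∀ x : X, Cardinal.mk {y : X | p y * T * p x ≠ 0} ≤ k) ∧
       (∀ y : X, Cardinal.mk {x : X | p y * T * p x ≠ 0} ≤ k)}

/-- with pairwise disjoint finite sets `X_r` of cardinality `r`, unit vectors
`η_x` in the ranges of the projections, points `j_r ∈ X_r`, spreading vectors
`ξ_r = r^{-1/2} ∑_{x ∈ X_r} η_x`, and `V` an operator with `V η_{j_r} = ξ_r`, every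
`T ∈ S_k` satisfies `‖T - V‖ ≥ 1`. -/
theorem dist_to_spreading_operator
    {H : Type*} [NormedAddCommGroup H] [InnerProductSpace ℂ H] [CompleteSpace H]
    {X : Type*} (p : X → (H →L[ℂ] H))
    (hsa : ∀ x, IsSelfAdjoint (p x))
    (hidem : ∀ x, IsIdempotentElem (p x))
    (horth : ∀ x y, x ≠ y → p x * p y = 0)
    (hcomplete : ∀ ξ : H, HasSum (fun x => p x ξ) ξ)
    (Xr : ℕ → Finset X)
    (hdisj : ∀ r s, 1 ≤ r → 1 ≤ s → r ≠ s → Disjoint (Xr r) (Xr s))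
    (hcard : ∀ r, 1 ≤ r → (Xr r).card = r)
    (η : X → H)
    (hη : ∀ r, 1 ≤ r → ∀ x ∈ Xr r, ‖η x‖ = 1 ∧ p x (η x) = η x)
    (j : ℕ → X) (hj : ∀ r, 1 ≤ r → j r ∈ Xr r)
    (ξ : ℕ → H)
    (hξ : ∀ r, 1 ≤ r → ξ r = (Real.sqrt r)⁻¹ • ∑ x ∈ Xr r, η x)
    (V : H →L[ℂ] H)
    (hV : ∀ r, 1 ≤ r → V (η (j r)) = ξ r)
    (k : ℕ) (T : H →L[ℂ] H) (hT : T ∈ blockSparse p k) :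
    1 ≤ ‖T - V‖ := by
  have key : ∀ r : ℕ, 1 ≤ r → 1 - (k : ℝ) / r ≤ ‖T - V‖ ^ 2 := by
    intro r hr
    classical
    have hrpos : (0 : ℝ) < r := by exact_mod_cast hr
    obtain ⟨hT1, -⟩ := hT
    have hmk := hT1 (j r)
    have hη1 := hη r hr (j r) (hj r hr)
    set ηr := η (j r) with hηr
    have hTnull : ∀ y, p y * T * p (j r) = 0 → p y (T ηr) = 0 := by
      intro y h
      have h0 : (p y * T * p (j r)) ηr = 0 := by rw [h]; rfl
      simpa [ContinuousLinearMap.mul_apply, hη1.2] using h0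
    set bad := (Xr r).filter (fun y => ¬ p y (T ηr) = 0) with hbad
    have hbadcard : bad.card ≤ k := by
      refine Cardinal.mk_le_iff_forall_finset_subset_card_le.mp hmk bad ?_
      intro y hy
      rcases Finset.mem_coe.mp hy with hy'
      intro h0
      exact (Finset.mem_filter.mp hy').2 (hTnull y h0)
    set G := (Xr r).filter (fun y => p y (T ηr) = 0) with hG
    have hsplit : G.card + bad.card = r := by
      rw [hG, hbad, Finset.card_filter_add_card_filter_not, hcard r hr]
    have hGcard : (r : ℝ) - k ≤ (G.card : ℝ) := by
      have h : r ≤ G.card + k := by omega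
      have h' : (r : ℝ) ≤ (G.card : ℝ) + k := by exact_mod_cast h
      linarith
    set ζ := (T - V) ηr with hζ
    have hζy : ∀ y ∈ G, ‖p y ζ‖ ^ 2 = 1 / r := by
      intro y hy
      have hyX : y ∈ Xr r := (Finset.mem_filter.mp hy).1
      have hy0 : p y (T ηr) = 0 := (Finset.mem_filter.mp hy).2
      have hηy := hη r hr y hyX
      have hsumy : ∑ x ∈ Xr r, p y (η x) = η y := by
        rw [Finset.sum_eq_single_of_mem y hyX]
        · exact hηy.2
        · intro x hx hxy
          have hx2 := (hη r hr x hx).2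
          calc p y (η x) = p y (p x (η x)) := by rw [hx2]
            _ = (p y * p x) (η x) := rfl
            _ = 0 := by rw [horth y x (fun h => hxy h.symm)]; rfl
      have hpyζ : p y ζ = -((Real.sqrt r)⁻¹ • η y) := by
        rw [hζ]
        have : (T - V) ηr = T ηr - V ηr := rfl
        rw [this, map_sub, hy0, hV r hr, hξ r hr, zero_sub]
        congr 1
        rw [(p y).map_smul_of_tower, map_sum, hsumy]
      rw [hpyζ, norm_neg, norm_smul, hηy.1, mul_one, Real.norm_eq_abs,
        abs_of_nonneg (by positivity), inv_pow, one_div, Real.sq_sqrt hrpos.le]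
    have hsum1 : ∑ y ∈ G, ‖p y ζ‖ ^ 2 = (G.card : ℝ) * (1 / r) := by
      rw [Finset.sum_congr rfl hζy, Finset.sum_const, nsmul_eq_mul]
    have hbes : ∑ y ∈ G, ‖p y ζ‖ ^ 2 ≤ ‖ζ‖ ^ 2 := bessel_proj p hsa hidem horth G ζ
    have hop : ‖ζ‖ ≤ ‖T - V‖ := by
      have := (T - V).le_opNorm ηr
      rwa [hη1.1, mul_one] at this
    have hop2 : ‖ζ‖ ^ 2 ≤ ‖T - V‖ ^ 2 := pow_le_pow_left₀ (norm_nonneg ζ) hop 2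
    have e : 1 - (k : ℝ) / r = ((r : ℝ) - k) / r := by field_simp
    have h5 : ((r : ℝ) - k) / r ≤ (G.card : ℝ) / r :=
      (div_le_div_iff_of_pos_right hrpos).mpr hGcard
    rw [e]
    calc ((r : ℝ) - k) / r ≤ (G.card : ℝ) / r := h5
      _ = (G.card : ℝ) * (1 / r) := by ring
      _ = ∑ y ∈ G, ‖p y ζ‖ ^ 2 := hsum1.symm
      _ ≤ ‖ζ‖ ^ 2 := hbes
      _ ≤ ‖T - V‖ ^ 2 := hop2
  have htend : Tendsto (fun r : ℕ => 1 - (k : ℝ) / r) atTop (nhds 1) := by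
    have h0 : Tendsto (fun r : ℕ => (k : ℝ) / r) atTop (nhds 0) :=
      tendsto_const_div_atTop_nhds_zero_nat (k : ℝ)
    simpa using (tendsto_const_nhds (x := (1 : ℝ)).sub h0)
  have hle : 1 ≤ ‖T - V‖ ^ 2 := by
    refine le_of_tendsto htend ?_
    filter_upwards [eventually_ge_atTop 1] with r hr using key r hr
  nlinarith [norm_nonneg (T - V)]
end

section
/- Let H be a complex Hilbert space, A ⊆ B(H) a commutative unital C*-subalgebra, E : B(H) → A a conditional expectation, ξ ∈ H a unit vector, and let q ∈ B(H) be the rank-one orthogonal projection onto the span of ξ. Suppose that for every ε > 0 there exist finitely many pairwise orthogonal projections e_1, …, e_n ∈ A with e_1 + ⋯ + e_n = 1 and ‖e_k ξ‖² < ε for every k. Then E(q) = 0. In particular, if E is faithful, no unit vector ξ ∈ H has this property. -/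
open ContinuousLinearMap RCLike

local notation "⟪" x ", " y "⟫" => @inner ℂ _ _ x y

lemma aux_eq_zero_of_le_eps {H : Type*} [NormedAddCommGroup H] [InnerProductSpace ℂ H]
    [CompleteSpace H] (T : H →L[ℂ] H) (h0 : 0 ≤ T)
    (h : ∀ ε : ℝ, 0 < ε → T ≤ (ε : ℂ) • 1) : T = 0 := by
  have hsa : IsSelfAdjoint T := ((nonneg_iff_isPositive T).mp h0).isSelfAdjoint
  refine le_antisymm ?_ h0
  rw [le_def, isPositive_def']
  refine ⟨by simpa using hsa.neg, fun x => ?_⟩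
  have key : ∀ ε : ℝ, 0 < ε → re ⟪T x, x⟫ ≤ ε * ‖x‖ ^ 2 := by
    intro ε hε
    have h1 := ((le_def _ _).mp (h ε hε)).2 x
    rw [reApplyInnerSelf] at h1
    simp only [sub_apply, smul_apply, one_apply_eq_self, inner_sub_left, inner_smul_left, map_sub] at h1
    rw [inner_self_eq_norm_sq_to_K] at h1
    simp at h1
    rw [← Complex.ofReal_pow, Complex.ofReal_re] at h1
    simp only [re_to_complex]
    linarith
  have hle : re ⟪T x, x⟫ ≤ 0 := by
    by_contra hc
    push_neg at hc
    have hd : (0:ℝ) < 2 * (‖x‖ ^ 2 + 1) := by positivity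
    have h2 := key (re ⟪T x, x⟫ / (2 * (‖x‖ ^ 2 + 1))) (by positivity)
    have h3 : re ⟪T x, x⟫ / (2 * (‖x‖ ^ 2 + 1)) * ‖x‖ ^ 2 < re ⟪T x, x⟫ := by
      rw [div_mul_eq_mul_div, div_lt_iff₀ hd]
      nlinarith [sq_nonneg ‖x‖]
    linarith
  rw [reApplyInnerSelf]
  simp only [sub_apply, zero_apply, neg_apply]
  rw [zero_sub, inner_neg_left, map_neg]
  linarith

/-- Let `A ⊆ B(H)` be a commutative unital C*-subalgebra,
`E : B(H) → A` a conditional expectation, `ξ` a unit vector and `q` the rank-one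
projection onto `ℂξ`. If for every `ε > 0` there is a finite partition of unity
`e_1, …, e_n` in `A` by pairwise orthogonal projections with `‖e_k ξ‖² < ε` for all `k`,
then `E(q) = 0`; in particular `E` cannot be faithful. -/
theorem expectation_rankOne_vanishes
    {H : Type*} [NormedAddCommGroup H] [InnerProductSpace ℂ H] [CompleteSpace H]
    (A : StarSubalgebra ℂ (H →L[ℂ] H))
    (hAclosed : IsClosed (A : Set (H →L[ℂ] H)))
    (hAcomm : ∀ a ∈ A, ∀ b ∈ A, a * b = b * a)
    (E : (H →L[ℂ] H) →ₗ[ℂ] (H →L[ℂ] H))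
    (hErange : ∀ x : H →L[ℂ] H, E x ∈ A)
    (hEproj : ∀ a ∈ A, E a = a)
    (hEpos : ∀ x : H →L[ℂ] H, 0 ≤ x → 0 ≤ E x)
    (hEbimod : ∀ a ∈ A, ∀ b ∈ A, ∀ x : H →L[ℂ] H, E (a * x * b) = a * E x * b)
    (ξ : H) (hξ : ‖ξ‖ = 1)
    (q : H →L[ℂ] H) (hq : ∀ η : H, q η = (inner ℂ ξ η : ℂ) • ξ)
    (hpart : ∀ ε : ℝ, 0 < ε → ∃ (n : ℕ) (e : Fin n → (H →L[ℂ] H)),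
      (∀ i, e i ∈ A) ∧ (∀ i, IsSelfAdjoint (e i)) ∧ (∀ i, IsIdempotentElem (e i)) ∧
      (∀ i j, i ≠ j → e i * e j = 0) ∧ (∑ i, e i = 1) ∧ (∀ i, ‖e i ξ‖ ^ 2 < ε)) :
    E q = 0 ∧ ((∀ x : H →L[ℂ] H, 0 ≤ x → E x = 0 → x = 0) → False) := by
  -- q is positive
  have hq_sa : IsSelfAdjoint q := by
    rw [isSelfAdjoint_iff_isSymmetric]
    intro x y
    simp only [coe_coe, hq, inner_smul_left, inner_smul_right, inner_conj_symm]
    ring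
  have hq_pos : 0 ≤ q := by
    rw [nonneg_iff_isPositive, isPositive_def']
    refine ⟨hq_sa, fun x => ?_⟩
    rw [reApplyInnerSelf, hq, inner_smul_left, RCLike.conj_mul]
    simp
    rw [← Complex.ofReal_pow, Complex.ofReal_re]
    positivity
  have hqξ : q ξ = ξ := by
    rw [hq, inner_self_eq_norm_sq_to_K, hξ]
    norm_num
  have hEq0 : E q = 0 := by
    set p := E q with hp
    have hpA : p ∈ A := hErange q
    apply aux_eq_zero_of_le_eps p (hEpos q hq_pos)
    intro ε hε
    obtain ⟨n, e, heA, hesa, heid, horth, hsum, hnorm⟩ := hpart ε hε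
    have hmove : ∀ (i : Fin n) (u v : H), ⟪e i u, v⟫ = ⟪u, e i v⟫ := by
      intro i u v
      conv_lhs => rw [← (hesa i).adjoint_eq]
      exact adjoint_inner_left _ _ _
    -- p = ∑ i, e i * p * e i
    have hstepA : p = ∑ i, e i * p * e i := by
      have hcomm : ∀ i, p * e i = e i * p := fun i => hAcomm p hpA (e i) (heA i)
      calc p = (∑ i, e i) * p * (∑ j, e j) := by rw [hsum]; simp
        _ = ∑ j, ∑ i, e i * p * e j := by
            rw [Finset.mul_sum]
            exact Finset.sum_congr rfl fun j _ => by rw [Finset.sum_mul, Finset.sum_mul]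
        _ = ∑ i, ∑ j, e i * p * e j := Finset.sum_comm
        _ = ∑ i, e i * p * e i := by
            refine Finset.sum_congr rfl fun i _ => ?_
            rw [Finset.sum_eq_single i]
            · intro j _ hj
              rw [mul_assoc, hcomm j, ← mul_assoc, horth i j (Ne.symm hj), zero_mul]
            · intro h; exact absurd (Finset.mem_univ i) h
    have hstepB : p = E (∑ i, e i * q * e i) := by
      rw [map_sum, hstepA]
      exact Finset.sum_congr rfl fun i _ => (hEbimod (e i) (heA i) (e i) (heA i) q).symm
    -- ∑ i, e i * q * e i ≤ ε • 1
    have hstepC : (∑ i, e i * q * e i) ≤ (ε : ℂ) • 1 := by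
      rw [le_def, isPositive_def']
      constructor
      · have h1 : IsSelfAdjoint ((ε : ℂ) • (1 : H →L[ℂ] H)) := by
          rw [IsSelfAdjoint, star_smul, star_one]
          norm_num
        have h2 : IsSelfAdjoint (∑ i, e i * q * e i) := by
          rw [IsSelfAdjoint, star_sum]
          exact Finset.sum_congr rfl fun i _ => by
            rw [star_mul, star_mul, (hesa i).star_eq, hq_sa.star_eq, mul_assoc]
        exact h1.sub h2
      · intro x
        rw [reApplyInnerSelf]
        have h2 : ∀ i, ⟪ξ, e i x⟫ = ⟪e i ξ, e i x⟫ := by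
          intro i
          conv_lhs => rw [← (heid i).eq]
          rw [mul_apply_eq_comp]
          exact (hmove i ξ (e i x)).symm
        have hterm : ∀ i, re ⟪(e i * q * e i) x, x⟫ = ‖⟪e i ξ, e i x⟫‖ ^ 2 := by
          intro i
          have h1 : (e i * q * e i) x = (⟪ξ, e i x⟫) • (e i ξ) := by
            rw [mul_apply_eq_comp, mul_apply_eq_comp, hq, map_smul]
          have h3 : ⟪e i ξ, x⟫ = ⟪e i ξ, e i x⟫ := (hmove i ξ x).trans (h2 i)
          rw [h1, inner_smul_left, h2 i, h3, RCLike.conj_mul]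
          simp
          rw [← Complex.ofReal_pow, Complex.ofReal_re]
        have hbound : ∀ i, re ⟪(e i * q * e i) x, x⟫ ≤ ε * ‖e i x‖ ^ 2 := by
          intro i
          rw [hterm i]
          have hcs : ‖⟪e i ξ, e i x⟫‖ ≤ ‖e i ξ‖ * ‖e i x‖ := norm_inner_le_norm _ _
          have h4 : ‖⟪e i ξ, e i x⟫‖ ^ 2 ≤ ‖e i ξ‖ ^ 2 * ‖e i x‖ ^ 2 := by
            rw [← mul_pow]
            exact pow_le_pow_left₀ (norm_nonneg _) hcs 2
          have h5 := le_of_lt (hnorm i)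
          nlinarith [sq_nonneg ‖e i x‖]
        have hsumnorm : ∑ i, ‖e i x‖ ^ 2 = ‖x‖ ^ 2 := by
          have hterm2 : ∀ i, (‖e i x‖ ^ 2 : ℝ) = re ⟪e i x, x⟫ := by
            intro i
            have h6 : ⟪e i x, x⟫ = ⟪e i x, e i x⟫ := by
              conv_lhs => rw [← (heid i).eq, mul_apply_eq_comp]
              exact hmove i (e i x) x
            rw [h6, inner_self_eq_norm_sq_to_K]
            simp
            rw [← Complex.ofReal_pow, Complex.ofReal_re]
          simp_rw [hterm2]
          rw [← map_sum, ← sum_inner, ← ContinuousLinearMap.sum_apply, hsum, one_apply_eq_self,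
            inner_self_eq_norm_sq_to_K]
          simp
          rw [← Complex.ofReal_pow, Complex.ofReal_re]
        have hfin : re ⟪(∑ i, e i * q * e i) x, x⟫ ≤ ε * ‖x‖ ^ 2 := by
          rw [ContinuousLinearMap.sum_apply, sum_inner, map_sum]
          calc ∑ i, re ⟪(e i * q * e i) x, x⟫ ≤ ∑ i, ε * ‖e i x‖ ^ 2 :=
                Finset.sum_le_sum fun i _ => hbound i
            _ = ε * ‖x‖ ^ 2 := by rw [← Finset.mul_sum, hsumnorm]
        have heps : re ⟪((ε : ℂ) • (1 : H →L[ℂ] H)) x, x⟫ = ε * ‖x‖ ^ 2 := by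
          rw [smul_apply, one_apply_eq_self, inner_smul_left, inner_self_eq_norm_sq_to_K]
          simp
          rw [← Complex.ofReal_pow, Complex.ofReal_re]
          exact Or.inl rfl
        rw [sub_apply, inner_sub_left, map_sub, heps]
        linarith
    -- apply E
    have hEmono : 0 ≤ E ((ε : ℂ) • 1 - ∑ i, e i * q * e i) :=
      hEpos _ (sub_nonneg.mpr hstepC)
    rw [map_sub, map_smul, hEproj 1 A.one_mem, ← hstepB] at hEmono
    exact sub_nonneg.mp hEmono
  refine ⟨hEq0, fun hfaith => ?_⟩
  have hq0 : q = 0 := hfaith q hq_pos hEq0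
  rw [hq0] at hqξ
  simp at hqξ
  rw [← hqξ] at hξ
  simp at hξ
end
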